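/- Let Ω be a nonempty subset of ℝ^n, let L_0, …, L_m : ℝ^n → ℝ, and let a ∈ ℝ^{m+1} satisfy a_i < L_i(x) for all x ∈ Ω and all i. If x* ∈ Ω is properly Pareto optimal in the sense of Geoffrion, then there exist ε > 0 and an importance vector k ∈ ℝ^{m+1} with k_i > 0 for all i and Σ_{i=0}^m k_i = 1 such that x* minimizes over Ω the modified weighted Chebyshev objective ψ_{k,ε}(x) = max_{0≤i≤m} k_i [ (L_i(x) − a_i) + ε Σ_{j=0}^m (L_j(x) − a_j) ]. -/
import Mathlib


/-- Every properly Pareto optimal point (in the sense of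
Geoffrion) is a minimizer over `Ω` of the modified weighted Chebyshev
objective for some `ε > 0` and some positive importance vector `k` summing
to one. -/
theorem properlyParetoOptimal_minimizes_modifiedWeightedChebyshev
    (n m : ℕ) (Ω : Set (Fin n → ℝ))
    (L : Fin (m + 1) → (Fin n → ℝ) → ℝ)
    (a : Fin (m + 1) → ℝ)
    (hΩ : Ω.Nonempty)
    (ha : ∀ x ∈ Ω, ∀ i, a i < L i x)
    (xstar : Fin n → ℝ) (hxstar : xstar ∈ Ω)
    (hpareto : ¬ ∃ x' ∈ Ω, (∀ i, L i x' ≤ L i xstar) ∧ ∃ j, L j x' < L j xstar)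
    (hproper : ∃ M > (0 : ℝ), ∀ i, ∀ x' ∈ Ω, L i x' < L i xstar →
      ∃ j, L j xstar < L j x' ∧
        (L i xstar - L i x') / (L j x' - L j xstar) ≤ M) :
    ∃ ε > (0 : ℝ), ∃ k : Fin (m + 1) → ℝ,
      (∀ i, 0 < k i) ∧ (∑ i, k i = 1) ∧
        ∀ x ∈ Ω,
          Finset.univ.sup' Finset.univ_nonempty
              (fun i => k i * ((L i xstar - a i) + ε * ∑ j, (L j xstar - a j))) ≤
            Finset.univ.sup' Finset.univ_nonempty
              (fun i => k i * ((L i x - a i) + ε * ∑ j, (L j x - a j))) := by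
  obtain ⟨M, hMpos, hprop⟩ := hproper
  set ε : ℝ := 1 / (2 * ((m : ℝ) + 1) * M) with hεdef
  have hmpos : (0 : ℝ) < (m : ℝ) + 1 := by positivity
  have hεpos : (0 : ℝ) < ε := by
    rw [hεdef]; positivity
  have hε2 : ε * (2 * ((m : ℝ) + 1) * M) = 1 := by
    rw [hεdef]
    field_simp
  have hw : ∀ i, 0 < L i xstar - a i := fun i => sub_pos.2 (ha xstar hxstar i)
  set Sstar : ℝ := ∑ j, (L j xstar - a j) with hSstar
  have hSpos : 0 < Sstar := Finset.sum_pos (fun i _ => hw i) Finset.univ_nonempty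
  have hden : ∀ i, 0 < (L i xstar - a i) + ε * Sstar :=
    fun i => add_pos (hw i) (mul_pos hεpos hSpos)
  set T : ℝ := ∑ i, ((L i xstar - a i) + ε * Sstar)⁻¹ with hT
  have hTpos : 0 < T := Finset.sum_pos (fun i _ => inv_pos.2 (hden i)) Finset.univ_nonempty
  refine ⟨ε, hεpos, fun i => T⁻¹ * ((L i xstar - a i) + ε * Sstar)⁻¹,
    fun i => mul_pos (inv_pos.2 hTpos) (inv_pos.2 (hden i)), ?_, ?_⟩
  · rw [← Finset.mul_sum, ← hT]
    exact inv_mul_cancel₀ (ne_of_gt hTpos)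
  · intro x hx
    have hLHS : Finset.univ.sup' Finset.univ_nonempty
        (fun i => T⁻¹ * ((L i xstar - a i) + ε * Sstar)⁻¹ *
          ((L i xstar - a i) + ε * Sstar)) ≤ T⁻¹ := by
      apply Finset.sup'_le
      intro i _
      rw [mul_assoc, inv_mul_cancel₀ (ne_of_gt (hden i)), mul_one]
    refine hLHS.trans ?_
    by_contra hcon
    push_neg at hcon
    -- hcon : sup' ... < T⁻¹
    have hkey : ∀ i, (L i x - a i) + ε * ∑ j, (L j x - a j) <
        (L i xstar - a i) + ε * Sstar := by
      intro i
      have h1 : T⁻¹ * ((L i xstar - a i) + ε * Sstar)⁻¹ *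
          ((L i x - a i) + ε * ∑ j, (L j x - a j)) < T⁻¹ :=
        lt_of_le_of_lt (Finset.le_sup' (fun i => T⁻¹ * ((L i xstar - a i) + ε * Sstar)⁻¹ *
          ((L i x - a i) + ε * ∑ j, (L j x - a j))) (Finset.mem_univ i)) hcon
      have h2 : T⁻¹ * ((L i xstar - a i) + ε * Sstar)⁻¹ *
          ((L i x - a i) + ε * ∑ j, (L j x - a j)) <
          T⁻¹ * ((L i xstar - a i) + ε * Sstar)⁻¹ *
          ((L i xstar - a i) + ε * Sstar) := by
        have hr : T⁻¹ * ((L i xstar - a i) + ε * Sstar)⁻¹ *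
            ((L i xstar - a i) + ε * Sstar) = T⁻¹ := by
          rw [mul_assoc, inv_mul_cancel₀ (ne_of_gt (hden i)), mul_one]
        rw [hr]; exact h1
      exact lt_of_mul_lt_mul_left h2
        (le_of_lt (mul_pos (inv_pos.2 hTpos) (inv_pos.2 (hden i))))
    set d : Fin (m + 1) → ℝ := fun i => L i x - L i xstar with hd
    set D : ℝ := ∑ i, d i with hD
    have hDsum : (∑ j, (L j x - a j)) - Sstar = D := by
      rw [hSstar, hD, ← Finset.sum_sub_distrib]
      congr 1; funext j; ring
    have hkey' : ∀ i, d i + ε * D < 0 := by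
      intro i
      have h3 : ε * D = ε * (∑ j, (L j x - a j)) - ε * Sstar := by
        rw [← hDsum]; ring
      have h4 : d i = L i x - L i xstar := rfl
      linarith [hkey i]
    have hDneg : D < 0 := by
      have hsum : ∑ i : Fin (m + 1), (d i + ε * D) < 0 := by
        have h5 := Finset.sum_lt_sum_of_nonempty (s := Finset.univ)
          (f := fun i : Fin (m + 1) => d i + ε * D) (g := fun _ => (0 : ℝ))
          Finset.univ_nonempty (fun i _ => hkey' i)
        simpa using h5
      have heq : ∑ i : Fin (m + 1), (d i + ε * D) = D + ((m : ℝ) + 1) * (ε * D) := by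
        rw [Finset.sum_add_distrib, ← hD, Finset.sum_const, Finset.card_univ,
          Fintype.card_fin, nsmul_eq_mul]
        push_cast
        ring
      rw [heq] at hsum
      nlinarith
    obtain ⟨i0, _, hi0⟩ := Finset.exists_min_image Finset.univ d Finset.univ_nonempty
    have hd0 : ((m : ℝ) + 1) * d i0 ≤ D := by
      have : ∑ _i : Fin (m + 1), d i0 ≤ ∑ i, d i :=
        Finset.sum_le_sum (fun i hi => hi0 i hi)
      rw [Finset.sum_const, Finset.card_univ, Fintype.card_fin, nsmul_eq_mul] at this
      rw [hD]
      push_cast at this ⊢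
      linarith
    have hi0neg : d i0 < 0 := by nlinarith
    have hlt : L i0 x < L i0 xstar := by
      have : L i0 x - L i0 xstar < 0 := hi0neg
      linarith
    obtain ⟨j, hj1, hj2⟩ := hprop i0 x hx hlt
    have hdj : 0 < d j := sub_pos.2 hj1
    have hbound : L i0 xstar - L i0 x ≤ M * (L j x - L j xstar) :=
      (div_le_iff₀ (sub_pos.2 hj1)).1 hj2
    -- so -d i0 ≤ M * d j, hence -D ≤ (m+1) * M * d j
    have hb2 : -D ≤ ((m : ℝ) + 1) * (M * d j) := by
      have h4 : -d i0 ≤ M * d j := by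
        simp only [hd]
        linarith
      nlinarith
    have hkj := hkey' j
    -- d j + ε * D < 0, but -ε * D ≤ ε * (m+1) * M * d j = d j / 2
    nlinarith [mul_le_mul_of_nonneg_left hb2 hεpos.le, hdj, hε2, hkj]
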